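/- arXiv:1703.00336 — 2 statements merged into one kernel-verified Lean document; each statement's English description precedes it below -/
import Mathlib

section
/- Let V and W be finite-dimensional real vector spaces, L : V → W a linear map, and A ⊆ V a closed convex cone such that L(v) ≠ 0 for all nonzero v ∈ A. Then L(A) is closed in W. -/
/-- The image of a closed convex cone under a linear map injective on the cone is closed. -/
theorem stmt_1 {V W : Type*} [NormedAddCommGroup V] [NormedSpace ℝ V] [FiniteDimensional ℝ V]
    [NormedAddCommGroup W] [NormedSpace ℝ W] [FiniteDimensional ℝ W]
    (L : V →ₗ[ℝ] W) (A : Set V) (hclosed : IsClosed A)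
    (hadd : ∀ u ∈ A, ∀ v ∈ A, u + v ∈ A)
    (hsmul : ∀ t : ℝ, 0 ≤ t → ∀ v ∈ A, t • v ∈ A)
    (hker : ∀ v ∈ A, v ≠ 0 → L v ≠ 0) :
    IsClosed (L '' A) := by
  have hLc : Continuous L := L.continuous_of_finiteDimensional
  by_cases hA : ∃ v ∈ A, v ≠ 0
  · obtain ⟨v₀, hv₀A, hv₀⟩ := hA
    set S := A ∩ Metric.sphere (0:V) 1 with hS
    have hScomp : IsCompact S := (isCompact_sphere 0 1).inter_left hclosed
    have hSne : S.Nonempty := ⟨‖v₀‖⁻¹ • v₀, hsmul _ (by positivity) _ hv₀A, by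
      simp [norm_smul, norm_ne_zero_iff.mpr hv₀]⟩
    obtain ⟨u, huS, hu⟩ := hScomp.exists_isMinOn hSne (hLc.norm.continuousOn)
    have hune : u ≠ 0 := by
      intro h
      have := huS.2
      simp [h] at this
    have hc : 0 < ‖L u‖ := norm_pos_iff.mpr (hker u huS.1 hune)
    set c := ‖L u‖ with hcdef
    have hbound : ∀ v ∈ A, c * ‖v‖ ≤ ‖L v‖ := by
      intro v hv
      rcases eq_or_ne v 0 with rfl | hvne
      · simp
      · have hnv : (0:ℝ) < ‖v‖ := norm_pos_iff.mpr hvne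
        have hmem : ‖v‖⁻¹ • v ∈ S := ⟨hsmul _ (by positivity) _ hv, by
          simp [norm_smul, abs_of_nonneg (le_of_lt (inv_pos.mpr hnv)),
            inv_mul_cancel₀ hnv.ne']⟩
        have h1 : c ≤ ‖L (‖v‖⁻¹ • v)‖ := hu hmem
        have hLs : ‖L (‖v‖⁻¹ • v)‖ = ‖v‖⁻¹ * ‖L v‖ := by
          rw [map_smul, norm_smul, Real.norm_eq_abs, abs_of_nonneg (by positivity)]
        rw [hLs] at h1
        calc c * ‖v‖ ≤ (‖v‖⁻¹ * ‖L v‖) * ‖v‖ := by nlinarith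
          _ = ‖L v‖ := by field_simp
    apply IsSeqClosed.isClosed
    intro x w hx hlim
    choose v hvA hvL using hx
    obtain ⟨M, hM⟩ := hlim.norm.bddAbove_range
    have hbdd : Bornology.IsBounded (Set.range v) := by
      rw [isBounded_iff_forall_norm_le]
      refine ⟨M / c, ?_⟩
      rintro _ ⟨n, rfl⟩
      have h1 : c * ‖v n‖ ≤ ‖L (v n)‖ := hbound _ (hvA n)
      have h2 : ‖x n‖ ≤ M := hM ⟨n, rfl⟩
      rw [hvL n] at h1
      rw [le_div_iff₀ hc]
      nlinarith
    obtain ⟨a, _, φ, hφ, hconv⟩ :=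
      tendsto_subseq_of_bounded hbdd (fun n => Set.mem_range_self n)
    have haA : a ∈ A := hclosed.mem_of_tendsto hconv
      (Filter.Eventually.of_forall fun n => hvA (φ n))
    refine ⟨a, haA, ?_⟩
    have h1 : Filter.Tendsto (fun n => L (v (φ n))) Filter.atTop (nhds (L a)) :=
      (hLc.tendsto a).comp hconv
    have h2 : Filter.Tendsto (fun n => L (v (φ n))) Filter.atTop (nhds w) := by
      simp only [hvL]
      exact hlim.comp hφ.tendsto_atTop
    exact tendsto_nhds_unique h1 h2
  · push_neg at hA
    have hsub : L '' A ⊆ {0} := by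
      rintro _ ⟨v, hv, rfl⟩
      simp [hA v hv]
    rcases Set.subset_singleton_iff_eq.mp hsub with h | h
    · rw [h]; exact isClosed_empty
    · rw [h]; exact isClosed_singleton
end

section
/- Let S be a divisibility-closed additive sub-semigroup of ℤ² containing v, −v for a primitive vector v ≠ 0, and containing some w with det(v, w) ≠ 0 (where det is the standard 2×2 determinant pairing). Then S contains every u ∈ ℤ² with det(v, u) having the same sign as det(v, w), and every integer multiple of v. -/
lemma stmt_18_aux (S : Set (ℤ × ℤ))
    (haddS : ∀ u ∈ S, ∀ w ∈ S, u + w ∈ S) :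
    ∀ n : ℕ, ∀ x ∈ S, ((n : ℤ) + 1) • x ∈ S := by
  intro n
  induction n with
  | zero => intro x hx; simpa using hx
  | succ k ih =>
      intro x hx
      have : ((k : ℤ) + 1) • x + x ∈ S := haddS _ (ih x hx) x hx
      have h : ((k : ℤ) + 1 + 1) • x = ((k : ℤ) + 1) • x + x := by
        rw [add_smul, one_smul]
      rw [show ((k+1 : ℕ) : ℤ) + 1 = ((k : ℤ) + 1) + 1 by push_cast; ring, h]
      exact this

/-- A divisibility-closed additive sub-semigroup of `ℤ²` containing `±v` for a
primitive `v` and some `w` with `det(v, w) ≠ 0` contains every `u` with `det(v, u)` of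
the same sign as `det(v, w)`, and every integer multiple of `v`. -/
theorem stmt_18 (S : Set (ℤ × ℤ))
    (haddS : ∀ u ∈ S, ∀ w ∈ S, u + w ∈ S)
    (hdiv : ∀ u : ℤ × ℤ, ∀ k : ℕ, 1 ≤ k → (k : ℤ) • u ∈ S → u ∈ S)
    (v : ℤ × ℤ) (hvne : v ≠ 0) (hprim : IsCoprime v.1 v.2)
    (hv : v ∈ S) (hv' : -v ∈ S)
    (w : ℤ × ℤ) (hw : w ∈ S) (hdet : v.1 * w.2 - v.2 * w.1 ≠ 0) :
    (∀ u : ℤ × ℤ, 0 < (v.1 * w.2 - v.2 * w.1) * (v.1 * u.2 - v.2 * u.1) → u ∈ S) ∧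
    (∀ k : ℤ, k • v ∈ S) := by
  have hzero : (0 : ℤ × ℤ) ∈ S := by simpa using haddS v hv (-v) hv'
  -- positive multiples of elements of S are in S
  have hpos : ∀ x ∈ S, ∀ m : ℤ, 0 < m → m • x ∈ S := by
    intro x hx m hm
    obtain ⟨n, rfl⟩ : ∃ n : ℕ, m = (n : ℤ) + 1 := by
      refine ⟨(m - 1).toNat, ?_⟩
      omega
    exact stmt_18_aux S haddS n x hx
  have hzsmul : ∀ k : ℤ, k • v ∈ S := by
    intro k
    rcases lt_trichotomy k 0 with h | h | h
    · have : (-k) • (-v) ∈ S := hpos (-v) hv' (-k) (by omega)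
      simpa using this
    · simpa [h] using hzero
    · exact hpos v hv k h
  refine ⟨?_, hzsmul⟩
  intro u hu
  set D := v.1 * w.2 - v.2 * w.1 with hD
  set d := v.1 * u.2 - v.2 * u.1 with hd
  set c := u.1 * w.2 - u.2 * w.1 with hc
  have key : D • u = c • v + d • w := by
    apply Prod.ext <;> simp [hD, hd, hc] <;> ring
  rcases lt_trichotomy D 0 with hDneg | hD0 | hDpos
  · have hdneg : d < 0 := by nlinarith
    have h1 : (-d) • w ∈ S := hpos w hw (-d) (by omega)
    have h2 : (-c) • v + (-d) • w ∈ S := haddS _ (hzsmul (-c)) _ h1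
    have h3 : (-D) • u = (-c) • v + (-d) • w := by
      rw [neg_smul, neg_smul, neg_smul, key, neg_add]
    have h4 : ((-D).toNat : ℤ) • u ∈ S := by
      rw [show ((-D).toNat : ℤ) = -D by omega, h3]; exact h2
    exact hdiv u (-D).toNat (by omega) h4
  · exact absurd hD0 (by exact fun h => hdet (by rw [← hD] at *; omega))
  · have hdpos : 0 < d := by nlinarith
    have h1 : d • w ∈ S := hpos w hw d hdpos
    have h2 : c • v + d • w ∈ S := haddS _ (hzsmul c) _ h1
    have h4 : (D.toNat : ℤ) • u ∈ S := by
      rw [show (D.toNat : ℤ) = D by omega, key]; exact h2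
    exact hdiv u D.toNat (by omega) h4
end
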